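/- Let m, R, d be natural numbers with R^3 ≤ m < (R+1)^3 and d < 1000. Then there exists a unique natural number B with B ≤ 9 such that (10*R + B)^3 ≤ 1000*m + d < (10*R + B + 1)^3. That is, appending one new triple of decimal digits to m extends the integer cube root by exactly one new decimal digit. -/
import Mathlib


theorem aryabhata_cbrt_step (m R d : ℕ)
    (hR₁ : R ^ 3 ≤ m) (hR₂ : m < (R + 1) ^ 3) (hd : d < 1000) :
    ∃! B : ℕ, B ≤ 9 ∧ (10 * R + B) ^ 3 ≤ 1000 * m + d ∧
      1000 * m + d < (10 * R + B + 1) ^ 3 := by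
  set N := 1000 * m + d with hN
  have h0 : (10 * R + 0) ^ 3 ≤ N := by
    have : (10 * R + 0) ^ 3 = 1000 * R ^ 3 := by ring
    rw [this]; omega
  have h10 : N < (10 * R + 10) ^ 3 := by
    have : (10 * R + 10) ^ 3 = 1000 * (R + 1) ^ 3 := by ring
    rw [this]; omega
  set B := Nat.findGreatest (fun k => (10 * R + k) ^ 3 ≤ N) 9 with hB
  have hB9 : B ≤ 9 := Nat.findGreatest_le 9
  have hBle : (10 * R + B) ^ 3 ≤ N :=
    Nat.findGreatest_spec (P := fun k => (10 * R + k) ^ 3 ≤ N) (m := 0) (by omega) h0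
  have hBup : N < (10 * R + B + 1) ^ 3 := by
    rcases eq_or_lt_of_le hB9 with h | h
    · have e : 10 * R + B + 1 = 10 * R + 10 := by omega
      rw [e]; exact h10
    · have hg := Nat.findGreatest_is_greatest
        (P := fun k => (10 * R + k) ^ 3 ≤ N) (k := B + 1) (n := 9)
        (by omega) (by omega)
      simp only [not_le] at hg
      have e : 10 * R + (B + 1) = 10 * R + B + 1 := by omega
      rwa [e] at hg
  refine ⟨B, ⟨hB9, hBle, hBup⟩, ?_⟩
  rintro y ⟨hy9, hy1, hy2⟩
  by_contra hne
  rcases Nat.lt_or_ge y B with h | h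
  · have : (10 * R + y + 1) ^ 3 ≤ (10 * R + B) ^ 3 :=
      Nat.pow_le_pow_left (by omega) 3
    omega
  · have hlt : B < y := lt_of_le_of_ne h (Ne.symm hne)
    have : (10 * R + B + 1) ^ 3 ≤ (10 * R + y) ^ 3 :=
      Nat.pow_le_pow_left (by omega) 3
    omega
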